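/- arXiv:1304.1338 — 6 statements merged into one kernel-verified Lean document; each statement's English description precedes it below -/
import Mathlib

section
/- Let N = {n ∈ R* : n⁻¹ K* n = K*} be the normalizer of K* in R* where R = K(ε;σ). If σ = id then N = R*, and if σ ≠ id then N = K*. -/
@[ext]
structure TDN (K : Type*) [Field K] (σ : K →+* K) where
  a : K
  b : K

namespace TDN

variable {K : Type*} [Field K] {σ : K →+* K}

instance : Add (TDN K σ) := ⟨fun x y => ⟨x.a + y.a, x.b + y.b⟩⟩
instance : Mul (TDN K σ) := ⟨fun x y => ⟨x.a * y.a, x.a * y.b + x.b * σ y.a⟩⟩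
instance : Neg (TDN K σ) := ⟨fun x => ⟨-x.a, -x.b⟩⟩
instance : Zero (TDN K σ) := ⟨⟨0, 0⟩⟩
instance : One (TDN K σ) := ⟨⟨1, 0⟩⟩

@[simp] lemma add_a (x y : TDN K σ) : (x + y).a = x.a + y.a := rfl
@[simp] lemma add_b (x y : TDN K σ) : (x + y).b = x.b + y.b := rfl
@[simp] lemma mul_a (x y : TDN K σ) : (x * y).a = x.a * y.a := rfl
@[simp] lemma mul_b (x y : TDN K σ) : (x * y).b = x.a * y.b + x.b * σ y.a := rfl
@[simp] lemma neg_a (x : TDN K σ) : (-x).a = -x.a := rfl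
@[simp] lemma neg_b (x : TDN K σ) : (-x).b = -x.b := rfl
@[simp] lemma zero_a : (0 : TDN K σ).a = 0 := rfl
@[simp] lemma zero_b : (0 : TDN K σ).b = 0 := rfl
@[simp] lemma one_a : (1 : TDN K σ).a = 1 := rfl
@[simp] lemma one_b : (1 : TDN K σ).b = 0 := rfl

instance instRing : Ring (TDN K σ) where
  add := (· + ·)
  mul := (· * ·)
  zero := 0
  one := 1
  neg := Neg.neg
  add_assoc x y z := by ext <;> simp <;> ring
  zero_add x := by ext <;> simp
  add_zero x := by ext <;> simp
  add_comm x y := by ext <;> simp <;> ring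
  mul_assoc x y z := by ext <;> simp [map_mul] <;> ring
  one_mul x := by ext <;> simp
  mul_one x := by ext <;> simp
  left_distrib x y z := by ext <;> simp [map_add] <;> ring
  right_distrib x y z := by ext <;> simp [map_add] <;> ring
  zero_mul x := by ext <;> simp
  mul_zero x := by ext <;> simp
  neg_add_cancel x := by ext <;> simp
  nsmul := nsmulRec
  zsmul := zsmulRec

def eps : TDN K σ := ⟨0, 1⟩

end TDN

section Aux

variable {K : Type*} [Field K] {σ : K →+* K}

lemma TDN.unit_a_ne_zero (u : (TDN K σ)ˣ) : (u : TDN K σ).a ≠ 0 := by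
  intro h
  have h1 : (u : TDN K σ).a * ((u⁻¹ : (TDN K σ)ˣ) : TDN K σ).a = 1 := by
    rw [← TDN.mul_a, ← Units.val_mul, mul_inv_cancel, Units.val_one, TDN.one_a]
  rw [h, zero_mul] at h1
  exact zero_ne_one h1

lemma TDN.unit_inv_a (u : (TDN K σ)ˣ) :
    ((u⁻¹ : (TDN K σ)ˣ) : TDN K σ).a = (u : TDN K σ).a⁻¹ := by
  have h1 : ((((u⁻¹ : (TDN K σ)ˣ) : TDN K σ)) * (u : TDN K σ)).a = (1 : TDN K σ).a := by
    rw [← Units.val_mul, inv_mul_cancel, Units.val_one]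
  simp only [TDN.mul_a, TDN.one_a] at h1
  exact eq_inv_of_mul_eq_one_left h1

lemma TDN.sigma_a_ne_zero (u : (TDN K σ)ˣ) : σ (u : TDN K σ).a ≠ 0 := by
  intro h
  exact TDN.unit_a_ne_zero u (σ.injective (by simpa using h))

lemma TDN.unit_inv_b (u : (TDN K σ)ˣ) :
    ((u⁻¹ : (TDN K σ)ˣ) : TDN K σ).b
      = -((u : TDN K σ).a⁻¹ * (u : TDN K σ).b * (σ (u : TDN K σ).a)⁻¹) := by
  have h1 : ((((u⁻¹ : (TDN K σ)ˣ) : TDN K σ)) * (u : TDN K σ)).b = (1 : TDN K σ).b := by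
    rw [← Units.val_mul, inv_mul_cancel, Units.val_one]
  rw [TDN.mul_b, TDN.one_b, TDN.unit_inv_a] at h1
  have ha := TDN.unit_a_ne_zero u
  have hsa := TDN.sigma_a_ne_zero u
  generalize hx : ((u⁻¹ : (TDN K σ)ˣ) : TDN K σ).b = x at h1 ⊢
  field_simp at h1 ⊢
  linear_combination h1

lemma TDN.conj_val (n k : (TDN K σ)ˣ) (hk : (k : TDN K σ).b = 0) :
    ((n⁻¹ * k * n : (TDN K σ)ˣ) : TDN K σ)
      = ⟨(k : TDN K σ).a,
          (n : TDN K σ).a⁻¹ * (n : TDN K σ).b * ((k : TDN K σ).a - σ (k : TDN K σ).a)⟩ := by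
  have ha := TDN.unit_a_ne_zero n
  have hsa := TDN.sigma_a_ne_zero n
  ext
  · simp only [Units.val_mul, TDN.mul_a, TDN.unit_inv_a]
    field_simp
  · simp only [Units.val_mul, TDN.mul_b, TDN.mul_a, TDN.unit_inv_a, TDN.unit_inv_b, hk,
      map_mul]
    field_simp
    ring

/-- `c + 0ε` as a unit, for `c ≠ 0`. -/
def TDN.kunit (c : K) (hc : c ≠ 0) : (TDN K σ)ˣ :=
  ⟨⟨c, 0⟩, ⟨c⁻¹, 0⟩,
    by ext <;> simp [mul_inv_cancel₀ hc],
    by ext <;> simp [inv_mul_cancel₀ hc]⟩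

lemma TDN.image_eq (n : (TDN K σ)ˣ)
    (h : ∀ c : K, (n : TDN K σ).b * (c - σ c) = 0)
    (h' : ∀ c : K, ((n⁻¹ : (TDN K σ)ˣ) : TDN K σ).b * (c - σ c) = 0) :
    (fun k => n⁻¹ * k * n) '' {u : (TDN K σ)ˣ | (u : TDN K σ).b = 0}
      = {u : (TDN K σ)ˣ | (u : TDN K σ).b = 0} := by
  ext k
  constructor
  · rintro ⟨j, hj, rfl⟩
    show ((n⁻¹ * j * n : (TDN K σ)ˣ) : TDN K σ).b = 0
    rw [TDN.conj_val n j hj]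
    show (n : TDN K σ).a⁻¹ * (n : TDN K σ).b * ((j : TDN K σ).a - σ (j : TDN K σ).a) = 0
    linear_combination (n : TDN K σ).a⁻¹ * h (j : TDN K σ).a
  · intro hk
    refine ⟨n * k * n⁻¹, ?_, by simp only; group⟩
    show ((n * k * n⁻¹ : (TDN K σ)ˣ) : TDN K σ).b = 0
    have : (n * k * n⁻¹ : (TDN K σ)ˣ) = (n⁻¹)⁻¹ * k * n⁻¹ := by rw [inv_inv]
    rw [this, TDN.conj_val (n⁻¹) k hk]
    show ((n⁻¹ : (TDN K σ)ˣ) : TDN K σ).a⁻¹ * ((n⁻¹ : (TDN K σ)ˣ) : TDN K σ).b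
        * ((k : TDN K σ).a - σ (k : TDN K σ).a) = 0
    linear_combination ((n⁻¹ : (TDN K σ)ˣ) : TDN K σ).a⁻¹ * h' (k : TDN K σ).a

end Aux

/-- Let `N = {n ∈ R* : n⁻¹ K* n = K*}` be the normalizer of `K*` in `R*`,
where `R = K(ε;σ)` and `K* = {a + 0ε : a ≠ 0}` is embedded in `R*`. If `σ = id` then
`N = R*`, and if `σ ≠ id` then `N = K*`. -/
theorem normalizer_of_Kstar {K : Type*} [Field K] (σ : K →+* K) (hσ : Function.Injective σ)
    (Kset N : Set (TDN K σ)ˣ)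
    (hK : Kset = {u : (TDN K σ)ˣ | (u : TDN K σ).b = 0})
    (hN : N = {n : (TDN K σ)ˣ | (fun k => n⁻¹ * k * n) '' Kset = Kset}) :
    (σ = RingHom.id K → N = Set.univ) ∧ (σ ≠ RingHom.id K → N = Kset) := by
  constructor
  · intro hid
    subst hid
    rw [hN, hK]
    apply Set.eq_univ_of_forall
    intro n
    exact TDN.image_eq n (fun c => by simp) (fun c => by simp)
  · intro hne
    obtain ⟨c, hc⟩ : ∃ c : K, σ c ≠ c := by
      by_contra h
      push_neg at h
      exact hne (RingHom.ext h)
    have hc0 : c ≠ 0 := by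
      rintro rfl
      simp at hc
    rw [hN, hK]
    ext n
    simp only [Set.mem_setOf_eq]
    constructor
    · intro hmem
      have hk : TDN.kunit c hc0 ∈ {u : (TDN K σ)ˣ | (u : TDN K σ).b = 0} := rfl
      have h2 : (fun k => n⁻¹ * k * n) (TDN.kunit c hc0)
          ∈ {u : (TDN K σ)ˣ | (u : TDN K σ).b = 0} := by
        rw [← hmem]
        exact Set.mem_image_of_mem _ hk
      have h3 : ((n⁻¹ * TDN.kunit c hc0 * n : (TDN K σ)ˣ) : TDN K σ).b = 0 := h2
      rw [TDN.conj_val n (TDN.kunit c hc0) rfl] at h3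
      have h4 : (n : TDN K σ).a⁻¹ * (n : TDN K σ).b * (c - σ c) = 0 := h3
      have ha := TDN.unit_a_ne_zero n
      have hcs : c - σ c ≠ 0 := sub_ne_zero_of_ne (Ne.symm hc)
      have h5 := mul_eq_zero.mp h4
      rcases h5 with h5 | h5
      · rcases mul_eq_zero.mp h5 with h6 | h6
        · exact absurd h6 (inv_ne_zero ha)
        · exact h6
      · exact absurd h5 hcs
    · intro hb
      exact TDN.image_eq n (fun d => by rw [hb, zero_mul])
        (fun d => by rw [TDN.unit_inv_b, hb]; ring)
end

section
/- On the projective line P(R) over a local ring R, the relation R(a,b) ∥ R(c,d) ⟺ the matrix with rows (a,b),(c,d) is not invertible, is an equivalence relation, and each equivalence class has exactly |I| elements, where I is the maximal ideal of R. -/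
section ProjectiveLine

variable (R : Type*) [Ring R]

/-- `(a,b)` is an admissible representative: it is the first row of an invertible
`2×2` matrix over `R`. -/
def IsRep (p : R × R) : Prop :=
  ∃ c d : R, IsUnit (!![p.1, p.2; c, d] : Matrix (Fin 2) (Fin 2) R)

/-- The projective line over `R`: the cyclic submodules `R(a,b)` of `R²` with `(a,b)`
the first row of an invertible matrix. -/
def ProjLine : Set (Submodule R (R × R)) :=
  {P | ∃ p : R × R, IsRep R p ∧ P = Submodule.span R {p}}

/-- Parallelism: `R(a,b) ∥ R(c,d)` iff the matrix with rows `(a,b)`, `(c,d)` is not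
invertible. -/
def Par (P Q : Submodule R (R × R)) : Prop :=
  ∃ p q : R × R, IsRep R p ∧ IsRep R q ∧
    P = Submodule.span R {p} ∧ Q = Submodule.span R {q} ∧
    ¬ IsUnit (!![p.1, p.2; q.1, q.2] : Matrix (Fin 2) (Fin 2) R)

end ProjectiveLine

namespace ParAux

set_option linter.unusedSectionVars false

variable {R : Type*} [Ring R]

/-! ### Generalities on units and nonunits -/

lemma unit_of_left_inv [Finite R] {x y : R} (h : y * x = 1) : IsUnit x := by
  have hinj : Function.Injective (fun z : R => x * z) := by
    intro z1 z2 hz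
    have := congrArg (fun t => y * t) hz
    simpa [← mul_assoc, h] using this
  obtain ⟨w, hw⟩ := (Finite.injective_iff_surjective.mp hinj) 1
  simp only at hw
  have hyw : y = w := by
    calc y = y * (x * w) := by rw [hw, mul_one]
    _ = (y * x) * w := by rw [mul_assoc]
    _ = w := by rw [h, one_mul]
  exact ⟨⟨x, w, hw, hyw ▸ h⟩, rfl⟩

lemma unit_of_right_inv [Finite R] {x y : R} (h : x * y = 1) : IsUnit x := by
  have hinj : Function.Injective (fun z : R => z * x) := by
    intro z1 z2 hz
    have := congrArg (fun t => t * y) hz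
    simpa [mul_assoc, h] using this
  obtain ⟨w, hw⟩ := (Finite.injective_iff_surjective.mp hinj) 1
  simp only at hw
  have hyw : y = w := by
    calc y = (w * x) * y := by rw [hw, one_mul]
    _ = w * (x * y) := by rw [mul_assoc]
    _ = w := by rw [h, mul_one]
  exact ⟨⟨x, w, hyw ▸ h, hw⟩, rfl⟩

lemma nu_mul_left [Finite R] {x : R} (r : R) (hx : ¬ IsUnit x) : ¬ IsUnit (r * x) := by
  intro hu
  obtain ⟨u, hu'⟩ := hu
  exact hx (unit_of_left_inv (y := ↑u⁻¹ * r) (by rw [mul_assoc, ← hu', Units.inv_mul]))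

lemma nu_mul_right [Finite R] {x : R} (r : R) (hx : ¬ IsUnit x) : ¬ IsUnit (x * r) := by
  intro hu
  obtain ⟨u, hu'⟩ := hu
  exact hx (unit_of_right_inv (y := r * ↑u⁻¹) (by rw [← mul_assoc, ← hu', Units.mul_inv]))

lemma nu_add [IsLocalRing R] {x y : R} (hx : ¬ IsUnit x) (hy : ¬ IsUnit y) :
    ¬ IsUnit (x + y) := by
  intro hu
  obtain ⟨u, hu'⟩ := hu
  have h1 : x * ↑u⁻¹ + y * ↑u⁻¹ = 1 := by
    rw [← add_mul, ← hu', Units.mul_inv]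
  rcases IsLocalRing.isUnit_or_isUnit_of_add_one h1 with h | h
  · exact hx (by simpa using h.mul u.isUnit)
  · exact hy (by simpa using h.mul u.isUnit)

lemma nu_neg {x : R} (hx : ¬ IsUnit x) : ¬ IsUnit (-x) := fun h => hx (by simpa using h.neg)

lemma nu_sub [IsLocalRing R] {x y : R} (hx : ¬ IsUnit x) (hy : ¬ IsUnit y) :
    ¬ IsUnit (x - y) := by
  rw [sub_eq_add_neg]; exact nu_add hx (nu_neg hy)

lemma unit_add_nu [IsLocalRing R] {x y : R} (hx : IsUnit x) (hy : ¬ IsUnit y) :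
    IsUnit (x + y) := by
  by_contra h
  have := nu_add h (nu_neg hy)
  simp only [add_assoc, add_neg_cancel, add_zero] at this
  exact this hx

/-! ### Invertibility of 2×2 matrices in terms of entries -/

lemma mu_iff (a b c d : R) : IsUnit (!![a,b;c,d] : Matrix (Fin 2) (Fin 2) R) ↔ ∃ e f g h : R,
    (a*e + b*g = 1 ∧ a*f + b*h = 0 ∧ c*e + d*g = 0 ∧ c*f + d*h = 1) ∧
    (e*a + f*c = 1 ∧ e*b + f*d = 0 ∧ g*a + h*c = 0 ∧ g*b + h*d = 1) := by
  rw [isUnit_iff_exists]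
  constructor
  · rintro ⟨N, h1, h2⟩
    rw [Matrix.eta_fin_two N] at h1 h2
    rw [Matrix.mul_fin_two, Matrix.one_fin_two, ← Matrix.ext_iff] at h1 h2
    simp only [Fin.forall_fin_two, Matrix.cons_val', Matrix.cons_val_zero, Matrix.cons_val_one,
      Matrix.head_cons, Matrix.empty_val', Matrix.cons_val_fin_one, Matrix.head_fin_const] at h1 h2
    exact ⟨N 0 0, N 0 1, N 1 0, N 1 1, ⟨h1.1.1, h1.1.2, h1.2.1, h1.2.2⟩,
      ⟨h2.1.1, h2.1.2, h2.2.1, h2.2.2⟩⟩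
  · rintro ⟨e, f, g, h, ⟨h11, h12, h13, h14⟩, ⟨h21, h22, h23, h24⟩⟩
    refine ⟨!![e,f;g,h], ?_, ?_⟩ <;>
      rw [Matrix.mul_fin_two, Matrix.one_fin_two] <;>
      simp [h11, h12, h13, h14, h21, h22, h23, h24]

lemma mu_tri_upper (u t : Rˣ) (b : R) :
    IsUnit (!![(u:R), b; 0, (t:R)] : Matrix (Fin 2) (Fin 2) R) := by
  refine (mu_iff _ _ _ _).mpr ⟨↑u⁻¹, -(↑u⁻¹*b*↑t⁻¹), 0, ↑t⁻¹, ?_, ?_⟩ <;>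
    refine ⟨?_, ?_, ?_, ?_⟩ <;>
    simp [mul_assoc, Units.mul_inv_cancel_left, Units.inv_mul_cancel_left, mul_sub, sub_mul]

lemma mu_tri_anti (v s : Rˣ) (a : R) :
    IsUnit (!![a, (v:R); (s:R), 0] : Matrix (Fin 2) (Fin 2) R) := by
  refine (mu_iff _ _ _ _).mpr ⟨0, ↑s⁻¹, ↑v⁻¹, -(↑v⁻¹*a*↑s⁻¹), ?_, ?_⟩ <;>
    refine ⟨?_, ?_, ?_, ?_⟩ <;>
    simp [mul_assoc, Units.mul_inv_cancel_left, Units.inv_mul_cancel_left, mul_sub, sub_mul]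

lemma mu_lower (x : R) : IsUnit (!![1, 0; x, 1] : Matrix (Fin 2) (Fin 2) R) := by
  refine (mu_iff _ _ _ _).mpr ⟨1, 0, -x, 1, ?_, ?_⟩ <;> refine ⟨?_, ?_, ?_, ?_⟩ <;> simp

lemma mu_diag (u : Rˣ) : IsUnit (!![(u:R), 0; 0, 1] : Matrix (Fin 2) (Fin 2) R) := by
  refine (mu_iff _ _ _ _).mpr ⟨↑u⁻¹, 0, 0, 1, ?_, ?_⟩ <;> refine ⟨?_, ?_, ?_, ?_⟩ <;> simp

lemma fin2_eq {a b c d a' b' c' d' : R} (h1 : a = a') (h2 : b = b') (h3 : c = c')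
    (h4 : d = d') : (!![a,b;c,d] : Matrix (Fin 2) (Fin 2) R) = !![a',b';c',d'] := by
  rw [h1, h2, h3, h4]

/-! ### Representatives -/

variable [IsLocalRing R] [Finite R]

lemma rep_unit_coord {p : R × R} (hp : IsRep R p) : IsUnit p.1 ∨ IsUnit p.2 := by
  obtain ⟨c, d, hm⟩ := hp
  obtain ⟨e, f, g, h, ⟨h11, -⟩, -⟩ := (mu_iff _ _ _ _).mp hm
  by_contra hcon
  push_neg at hcon
  exact (nu_add (nu_mul_right e hcon.1) (nu_mul_right g hcon.2)) (h11 ▸ isUnit_one)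

lemma rep_cancel {p : R × R} (hp : IsRep R p) {x : R} (h1 : x * p.1 = 0)
    (h2 : x * p.2 = 0) : x = 0 := by
  obtain ⟨c, d, hm⟩ := hp
  obtain ⟨e, f, g, h, ⟨h11, -⟩, -⟩ := (mu_iff _ _ _ _).mp hm
  calc x = x * (p.1 * e + p.2 * g) := by rw [h11, mul_one]
  _ = (x * p.1) * e + (x * p.2) * g := by noncomm_ring
  _ = 0 := by rw [h1, h2]; simp

lemma rep_pair_left (m : R) : IsRep R ((1 : R), m) :=
  ⟨0, 1, by simpa using mu_tri_upper 1 1 m⟩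

lemma rep_pair_right (m : R) : IsRep R (m, (1 : R)) :=
  ⟨1, 0, by simpa using mu_tri_anti 1 1 m⟩

lemma rep_smul (u : Rˣ) {p : R × R} (hp : IsRep R p) : IsRep R ((u:R) • p) := by
  obtain ⟨c, d, hm⟩ := hp
  refine ⟨c, d, ?_⟩
  have decomp : (!![((u:R) • p).1, ((u:R) • p).2; c, d] : Matrix (Fin 2) (Fin 2) R)
      = !![(u:R), 0; 0, 1] * !![p.1, p.2; c, d] := by
    rw [Matrix.mul_fin_two]
    refine (fin2_eq ?_ ?_ ?_ ?_).symm <;> simp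
  rw [decomp]
  exact (mu_diag u).mul hm

/-! ### The `Close` relation on representatives -/

/-- parallelism at the level of representatives -/
def Close (p q : R × R) : Prop :=
  ∃ u : Rˣ, ¬ IsUnit (q.1 - (u:R) * p.1) ∧ ¬ IsUnit (q.2 - (u:R) * p.2)

lemma close_nu_mat {p q : R × R} (h : Close p q) :
    ¬ IsUnit (!![p.1, p.2; q.1, q.2] : Matrix (Fin 2) (Fin 2) R) := by
  obtain ⟨u, hi, hj⟩ := h
  intro hm
  obtain ⟨e, f, g, h, ⟨-, h12, -, h14⟩, -⟩ := (mu_iff _ _ _ _).mp hm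
  have key : (q.1 - (u:R)*p.1)*f + (q.2 - (u:R)*p.2)*h
      = (q.1*f + q.2*h) - (u:R)*(p.1*f + p.2*h) := by noncomm_ring
  rw [h12, h14, mul_zero, sub_zero] at key
  exact (nu_add (nu_mul_right f hi) (nu_mul_right h hj)) (key ▸ isUnit_one)

lemma not_unit_close {p q : R × R} (hp : IsRep R p) (hq : IsRep R q)
    (hm : ¬ IsUnit (!![p.1, p.2; q.1, q.2] : Matrix (Fin 2) (Fin 2) R)) : Close p q := by
  rcases rep_unit_coord hp with hA | hB
  · obtain ⟨A, hA⟩ := hA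
    by_cases ht : IsUnit (q.2 - (q.1 * ↑A⁻¹) * p.2)
    · exfalso
      obtain ⟨T, hT⟩ := ht
      apply hm
      have decomp : (!![p.1, p.2; q.1, q.2] : Matrix (Fin 2) (Fin 2) R)
          = !![1, 0; q.1 * ↑A⁻¹, 1] * !![(A:R), p.2; 0, (T:R)] := by
        rw [Matrix.mul_fin_two]
        refine (fin2_eq ?_ ?_ ?_ ?_).symm
        · rw [one_mul, zero_mul, add_zero, hA]
        · rw [one_mul, zero_mul, add_zero]
        · simp [Units.inv_mul_cancel_right]
        · rw [one_mul, hT]; abel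
      rw [decomp]
      exact (mu_lower _).mul (mu_tri_upper A T p.2)
    · have hq1 : IsUnit (q.1 * ↑A⁻¹) := by
        by_contra hc
        have hq1' : ¬ IsUnit q.1 := by
          intro h
          have : IsUnit (q.1 * ↑A⁻¹) := h.mul A⁻¹.isUnit
          exact hc this
        rcases rep_unit_coord hq with h | h
        · exact hq1' h
        · apply nu_add ht (nu_mul_right p.2 hc)
          have : q.2 - q.1 * ↑A⁻¹ * p.2 + q.1 * ↑A⁻¹ * p.2 = q.2 := sub_add_cancel _ _
          rw [this]
          exact h
      obtain ⟨U, hU⟩ := hq1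
      refine ⟨U, ?_, ?_⟩
      · rw [hU, ← hA]
        have : q.1 * ↑A⁻¹ * ↑A = q.1 := Units.inv_mul_cancel_right _ _
        rw [this, sub_self]
        exact not_isUnit_zero
      · rw [hU]
        exact ht
  · obtain ⟨B, hB⟩ := hB
    by_cases ht : IsUnit (q.1 - (q.2 * ↑B⁻¹) * p.1)
    · exfalso
      obtain ⟨S, hS⟩ := ht
      apply hm
      have decomp : (!![p.1, p.2; q.1, q.2] : Matrix (Fin 2) (Fin 2) R)
          = !![1, 0; q.2 * ↑B⁻¹, 1] * !![p.1, (B:R); (S:R), 0] := by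
        rw [Matrix.mul_fin_two]
        refine (fin2_eq ?_ ?_ ?_ ?_).symm
        · simp
        · simp [hB]
        · rw [one_mul, hS]; abel
        · simp [Units.inv_mul_cancel_right]
      rw [decomp]
      exact (mu_lower _).mul (mu_tri_anti B S p.1)
    · have hq2 : IsUnit (q.2 * ↑B⁻¹) := by
        by_contra hc
        have hq2' : ¬ IsUnit q.2 := fun h => hc (h.mul B⁻¹.isUnit)
        rcases rep_unit_coord hq with h | h
        · apply nu_add ht (nu_mul_right p.1 hc)
          have : q.1 - q.2 * ↑B⁻¹ * p.1 + q.2 * ↑B⁻¹ * p.1 = q.1 := sub_add_cancel _ _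
          rw [this]; exact h
        · exact hq2' h
      obtain ⟨U, hU⟩ := hq2
      refine ⟨U, ?_, ?_⟩
      · rw [hU]; exact ht
      · rw [hU, ← hB]
        have : q.2 * ↑B⁻¹ * ↑B = q.2 := Units.inv_mul_cancel_right _ _
        rw [this, sub_self]
        exact not_isUnit_zero

lemma close_refl (p : R × R) : Close p p :=
  ⟨1, by simp [not_isUnit_zero], by simp [not_isUnit_zero]⟩

lemma close_symm {p q : R × R} (h : Close p q) : Close q p := by
  obtain ⟨u, h1, h2⟩ := h
  refine ⟨u⁻¹, ?_, ?_⟩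
  · have key : p.1 - (↑u⁻¹:R) * q.1 = -((↑u⁻¹:R) * (q.1 - (u:R) * p.1)) := by
      rw [mul_sub, Units.inv_mul_cancel_left]; abel
    rw [key]
    exact nu_neg (nu_mul_left _ h1)
  · have key : p.2 - (↑u⁻¹:R) * q.2 = -((↑u⁻¹:R) * (q.2 - (u:R) * p.2)) := by
      rw [mul_sub, Units.inv_mul_cancel_left]; abel
    rw [key]
    exact nu_neg (nu_mul_left _ h2)

lemma close_trans {p q s : R × R} (h1 : Close p q) (h2 : Close q s) : Close p s := by
  obtain ⟨u, hu1, hu2⟩ := h1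
  obtain ⟨v, hv1, hv2⟩ := h2
  refine ⟨v * u, ?_, ?_⟩
  · have key : s.1 - (↑(v*u):R) * p.1
        = (s.1 - (v:R) * q.1) + (v:R) * (q.1 - (u:R) * p.1) := by
      rw [Units.val_mul]; noncomm_ring
    rw [key]
    exact nu_add hv1 (nu_mul_left _ hu1)
  · have key : s.2 - (↑(v*u):R) * p.2
        = (s.2 - (v:R) * q.2) + (v:R) * (q.2 - (u:R) * p.2) := by
      rw [Units.val_mul]; noncomm_ring
    rw [key]
    exact nu_add hv2 (nu_mul_left _ hu2)

lemma close_smul_left {p q : R × R} (w : Rˣ) (h : Close ((w:R) • p) q) : Close p q := by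
  obtain ⟨u, h1, h2⟩ := h
  refine ⟨u * w, ?_, ?_⟩
  · have : (↑(u*w):R) * p.1 = (u:R) * (((w:R) • p).1) := by
      simp [Units.val_mul, mul_assoc]
    rw [this]; exact h1
  · have : (↑(u*w):R) * p.2 = (u:R) * (((w:R) • p).2) := by
      simp [Units.val_mul, mul_assoc]
    rw [this]; exact h2

/-! ### Spans -/

lemma span_smul_unit (u : Rˣ) (p : R × R) :
    Submodule.span R {(u:R) • p} = Submodule.span R {p} := by
  apply le_antisymm
  · rw [Submodule.span_le, Set.singleton_subset_iff]
    exact Submodule.smul_mem _ _ (Submodule.mem_span_singleton_self p)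
  · rw [Submodule.span_le, Set.singleton_subset_iff]
    have h := Submodule.smul_mem (Submodule.span R {(u:R) • p}) ((↑u⁻¹:R))
      (Submodule.mem_span_singleton_self ((u:R) • p))
    rwa [smul_smul, Units.inv_mul, one_smul] at h

lemma eq_unit_smul_of_span_eq {p q : R × R} (hp : IsRep R p) (hq : IsRep R q)
    (h : Submodule.span R {p} = Submodule.span R {q}) : ∃ w : Rˣ, q = (w:R) • p := by
  have hq' : q ∈ Submodule.span R {p} := h ▸ Submodule.mem_span_singleton_self q
  have hp' : p ∈ Submodule.span R {q} := h ▸ Submodule.mem_span_singleton_self p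
  obtain ⟨x, hx⟩ := Submodule.mem_span_singleton.mp hq'
  obtain ⟨y, hy⟩ := Submodule.mem_span_singleton.mp hp'
  have hyx : y * x = 1 := by
    have h0 : (y * x - 1) • p = 0 := by
      have h' : (y * x) • p = p := by rw [mul_smul, hx, hy]
      rw [sub_smul, h', one_smul, sub_self]
    have h1 : (y*x - 1) * p.1 = 0 := by
      have := congrArg Prod.fst h0; simpa using this
    have h2 : (y*x - 1) * p.2 = 0 := by
      have := congrArg Prod.snd h0; simpa using this
    have := rep_cancel hp h1 h2
    exact sub_eq_zero.mp this
  have hxy : x * y = 1 := by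
    have h0 : (x * y - 1) • q = 0 := by
      have h' : (x * y) • q = q := by rw [mul_smul, hy, hx]
      rw [sub_smul, h', one_smul, sub_self]
    have h1 : (x*y - 1) * q.1 = 0 := by
      have := congrArg Prod.fst h0; simpa using this
    have h2 : (x*y - 1) * q.2 = 0 := by
      have := congrArg Prod.snd h0; simpa using this
    have := rep_cancel hq h1 h2
    exact sub_eq_zero.mp this
  exact ⟨⟨x, y, hxy, hyx⟩, hx.symm⟩

/-! ### `Par` and `Close` -/

lemma par_close_left {P S : Submodule R (R × R)} {p₀ : R × R} (hp₀ : IsRep R p₀)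
    (hP : P = Submodule.span R {p₀}) (h : Par R P S) :
    ∃ s : R × R, IsRep R s ∧ S = Submodule.span R {s} ∧ Close p₀ s := by
  obtain ⟨p, s, hp, hs, hP', hS, hm⟩ := h
  obtain ⟨w, hw⟩ := eq_unit_smul_of_span_eq hp₀ hp (by rw [← hP, hP'])
  have hclose : Close p s := not_unit_close hp hs hm
  exact ⟨s, hs, hS, close_smul_left w (hw ▸ hclose)⟩

end ParAux

set_option maxHeartbeats 1000000 in
open ParAux in
/-- On the projective line `P(R)` over a finite local ring `R`, the
relation `R(a,b) ∥ R(c,d) ⟺` the matrix with rows `(a,b)`, `(c,d)` is not invertible,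
is an equivalence relation on `P(R)`, and each equivalence class has exactly `|I|`
elements, where `I` is the maximal ideal (= set of non-units) of `R`. -/
theorem par_equivalence_and_class_size {R : Type*} [Ring R] [IsLocalRing R] [Finite R] :
    (∀ P ∈ ProjLine R, Par R P P) ∧
    (∀ P Q, Par R P Q → Par R Q P) ∧
    (∀ P Q S, Par R P Q → Par R Q S → Par R P S) ∧
    (∀ P ∈ ProjLine R,
      Nat.card {Q : ProjLine R // Par R P (Q : Submodule R (R × R))}
        = Nat.card {x : R // ¬ IsUnit x}) := by
  refine ⟨?_, ?_, ?_, ?_⟩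
  · rintro P ⟨p, hp, rfl⟩
    exact ⟨p, p, hp, hp, rfl, rfl, close_nu_mat (close_refl p)⟩
  · rintro P Q ⟨p, q, hp, hq, hP, hQ, hm⟩
    exact ⟨q, p, hq, hp, hQ, hP, close_nu_mat (close_symm (not_unit_close hp hq hm))⟩
  · rintro P Q S ⟨p, q, hp, hq, hP, hQ, hm⟩ h2
    obtain ⟨s, hs, hS, hclose⟩ := par_close_left hq hQ h2
    exact ⟨p, s, hp, hs, hP, hS,
      close_nu_mat (close_trans (not_unit_close hp hq hm) hclose)⟩
  · rintro P ⟨p, hp, rfl⟩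
    rcases rep_unit_coord hp with ⟨A, hA⟩ | ⟨B, hB⟩
    · -- first coordinate is a unit
      set m : R := (↑A⁻¹ : R) * p.2 with hm_def
      have hpeq : p = (↑A : R) • ((1 : R), m) := by
        refine Prod.ext ?_ ?_
        · simp [hA]
        · simp [hm_def, Units.mul_inv_cancel_left]
      have hPspan : Submodule.span R {p} = Submodule.span R {((1:R), m)} := by
        rw [hpeq, span_smul_unit]
      have hrep0 : IsRep R ((1:R), m) := rep_pair_left m
      set f : {x : R // ¬ IsUnit x} →
          {Q : ProjLine R // Par R (Submodule.span R {p}) (Q : Submodule R (R × R))} :=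
        fun i => ⟨⟨Submodule.span R {((1:R), m + i.1)}, ⟨((1:R), m + i.1), rep_pair_left _, rfl⟩⟩,
          ⟨((1:R), m), ((1:R), m + i.1), hrep0, rep_pair_left _, hPspan, rfl,
            close_nu_mat ⟨1, by simp [not_isUnit_zero], by simpa using i.2⟩⟩⟩ with hf_def
      have hinj : Function.Injective f := by
        intro i j hij
        have hspan : Submodule.span R {((1:R), m + i.1)} = Submodule.span R {((1:R), m + j.1)} :=
          Subtype.ext_iff.mp (Subtype.ext_iff.mp hij)
        have hmem : ((1:R), m + j.1) ∈ Submodule.span R {((1:R), m + i.1)} :=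
          hspan ▸ Submodule.mem_span_singleton_self _
        obtain ⟨x, hx⟩ := Submodule.mem_span_singleton.mp hmem
        have hx1 : x = 1 := by
          have := congrArg Prod.fst hx; simpa using this
        have hx2 : x * (m + i.1) = m + j.1 := by
          have := congrArg Prod.snd hx; simpa using this
        rw [hx1, one_mul] at hx2
        exact Subtype.ext (by exact add_left_cancel hx2)
      have hsurj : Function.Surjective f := by
        rintro ⟨⟨Q, hQmem⟩, hpar⟩
        obtain ⟨s, hs, hS, hclose⟩ := par_close_left hrep0 hPspan hpar
        obtain ⟨u, hs1, hs2⟩ := hclose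
        have hs1' : ¬ IsUnit (s.1 - ↑u) := by simpa using hs1
        have hCu : IsUnit s.1 := by
          have := unit_add_nu u.isUnit hs1'
          simpa using this
        obtain ⟨C, hC⟩ := hCu
        have hkey : (↑C:R) * ((↑C⁻¹:R) * s.2 - m) = (s.2 - ↑u * m) - (s.1 - ↑u) * m := by
          rw [mul_sub, Units.mul_inv_cancel_left, hC]; noncomm_ring
        have hi₀ : ¬ IsUnit ((↑C⁻¹:R) * s.2 - m) := by
          intro hcon
          have h2 : ¬ IsUnit ((↑C:R) * ((↑C⁻¹:R) * s.2 - m)) :=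
            hkey ▸ nu_sub hs2 (nu_mul_right m hs1')
          exact h2 (C.isUnit.mul hcon)
        refine ⟨⟨(↑C⁻¹:R) * s.2 - m, hi₀⟩, ?_⟩
        apply Subtype.ext
        apply Subtype.ext
        show Submodule.span R {((1:R), m + ((↑C⁻¹:R) * s.2 - m))} = Q
        have hseq : s = (↑C:R) • ((1:R), m + ((↑C⁻¹:R) * s.2 - m)) := by
          refine Prod.ext ?_ ?_
          · simp [hC]
          · simp [add_sub_cancel, Units.mul_inv_cancel_left]
        have hS' : Q = Submodule.span R {s} := hS
        rw [hS']
        conv_rhs => rw [hseq]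
        rw [span_smul_unit]
      exact Nat.card_congr (Equiv.ofBijective f ⟨hinj, hsurj⟩).symm
    · -- second coordinate is a unit
      set m : R := (↑B⁻¹ : R) * p.1 with hm_def
      have hpeq : p = (↑B : R) • (m, (1 : R)) := by
        refine Prod.ext ?_ ?_
        · simp [hm_def, Units.mul_inv_cancel_left]
        · simp [hB]
      have hPspan : Submodule.span R {p} = Submodule.span R {(m, (1:R))} := by
        rw [hpeq, span_smul_unit]
      have hrep0 : IsRep R (m, (1:R)) := rep_pair_right m
      set f : {x : R // ¬ IsUnit x} →
          {Q : ProjLine R // Par R (Submodule.span R {p}) (Q : Submodule R (R × R))} :=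
        fun i => ⟨⟨Submodule.span R {(m + i.1, (1:R))}, ⟨(m + i.1, (1:R)), rep_pair_right _, rfl⟩⟩,
          ⟨(m, (1:R)), (m + i.1, (1:R)), hrep0, rep_pair_right _, hPspan, rfl,
            close_nu_mat ⟨1, by simpa using i.2, by simp [not_isUnit_zero]⟩⟩⟩ with hf_def
      have hinj : Function.Injective f := by
        intro i j hij
        have hspan : Submodule.span R {(m + i.1, (1:R))} = Submodule.span R {(m + j.1, (1:R))} :=
          Subtype.ext_iff.mp (Subtype.ext_iff.mp hij)
        have hmem : (m + j.1, (1:R)) ∈ Submodule.span R {(m + i.1, (1:R))} :=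
          hspan ▸ Submodule.mem_span_singleton_self _
        obtain ⟨x, hx⟩ := Submodule.mem_span_singleton.mp hmem
        have hx1 : x = 1 := by
          have := congrArg Prod.snd hx; simpa using this
        have hx2 : x * (m + i.1) = m + j.1 := by
          have := congrArg Prod.fst hx; simpa using this
        rw [hx1, one_mul] at hx2
        exact Subtype.ext (by exact add_left_cancel hx2)
      have hsurj : Function.Surjective f := by
        rintro ⟨⟨Q, hQmem⟩, hpar⟩
        obtain ⟨s, hs, hS, hclose⟩ := par_close_left hrep0 hPspan hpar
        obtain ⟨u, hs1, hs2⟩ := hclose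
        have hs2' : ¬ IsUnit (s.2 - ↑u) := by simpa using hs2
        have hCu : IsUnit s.2 := by
          have := unit_add_nu u.isUnit hs2'
          simpa using this
        obtain ⟨C, hC⟩ := hCu
        have hkey : (↑C:R) * ((↑C⁻¹:R) * s.1 - m) = (s.1 - ↑u * m) - (s.2 - ↑u) * m := by
          rw [mul_sub, Units.mul_inv_cancel_left, hC]; noncomm_ring
        have hi₀ : ¬ IsUnit ((↑C⁻¹:R) * s.1 - m) := by
          intro hcon
          have h2 : ¬ IsUnit ((↑C:R) * ((↑C⁻¹:R) * s.1 - m)) :=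
            hkey ▸ nu_sub hs1 (nu_mul_right m hs2')
          exact h2 (C.isUnit.mul hcon)
        refine ⟨⟨(↑C⁻¹:R) * s.1 - m, hi₀⟩, ?_⟩
        apply Subtype.ext
        apply Subtype.ext
        show Submodule.span R {(m + ((↑C⁻¹:R) * s.1 - m), (1:R))} = Q
        have hseq : s = (↑C:R) • (m + ((↑C⁻¹:R) * s.1 - m), (1:R)) := by
          refine Prod.ext ?_ ?_
          · simp [add_sub_cancel, Units.mul_inv_cancel_left]
          · simp [hC]
        have hS' : Q = Submodule.span R {s} := hS
        rw [hS']
        conv_rhs => rw [hseq]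
        rw [span_smul_unit]
      exact Nat.card_congr (Equiv.ofBijective f ⟨hinj, hsurj⟩).symm
end

section
/- The group GL₂(R), for R a finite local ring, acts transitively on ordered triples of pairwise non-parallel points of the projective line P(R). -/
section Action

variable {R : Type*} [Ring R]

/-- The (left-)linear map `R² → R²` given by right multiplication of row vectors with
the matrix `g`. -/
def actMap (g : Matrix (Fin 2) (Fin 2) R) : (R × R) →ₗ[R] (R × R) where
  toFun p := (p.1 * g 0 0 + p.2 * g 1 0, p.1 * g 0 1 + p.2 * g 1 1)
  map_add' p q := by
    simp only [Prod.fst_add, Prod.snd_add, add_mul, Prod.mk_add_mk]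
    refine Prod.ext ?_ ?_ <;> dsimp <;> abel
  map_smul' r p := by
    simp only [Prod.smul_fst, Prod.smul_snd, smul_eq_mul, RingHom.id_apply, Prod.smul_mk,
      mul_add, mul_assoc]

end Action

section Aux
variable {R : Type*} [Ring R]

lemma actMap_mul (A B : Matrix (Fin 2) (Fin 2) R) :
    actMap (A * B) = (actMap B).comp (actMap A) := by
  refine LinearMap.ext fun x => ?_
  refine Prod.ext ?_ ?_ <;>
  · simp only [actMap, LinearMap.comp_apply, LinearMap.coe_mk, AddHom.coe_mk,
      Matrix.mul_apply, Fin.sum_univ_two]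
    noncomm_ring

lemma actMap_one : (actMap (1 : Matrix (Fin 2) (Fin 2) R)) = LinearMap.id := by
  refine LinearMap.ext fun x => ?_
  simp [actMap, Matrix.one_apply]

lemma unit_of_top (α β : R) (h : IsUnit (!![(0:R),1;α,β])) : IsUnit α := by
  obtain ⟨u, hu⟩ := h
  set B : Matrix (Fin 2) (Fin 2) R := (u⁻¹).val with hB
  have h1 : !![(0:R),1;α,β] * B = 1 := by rw [← hu, hB]; exact u.mul_inv
  have h2 : B * !![(0:R),1;α,β] = 1 := by rw [← hu, hB]; exact u.inv_mul
  have e11 : B 1 1 = 0 := by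
    have := congrFun (congrFun h1 0) 1
    simpa [Matrix.mul_apply, Fin.sum_univ_two, Matrix.one_apply] using this
  refine isUnit_iff_exists.2 ⟨B 0 1, ?_, ?_⟩
  · have := congrFun (congrFun h1 1) 1
    simpa [Matrix.mul_apply, Fin.sum_univ_two, Matrix.one_apply, e11] using this
  · have := congrFun (congrFun h2 0) 0
    simpa [Matrix.mul_apply, Fin.sum_univ_two, Matrix.one_apply] using this

lemma unit_of_bot (α β : R) (h : IsUnit (!![(1:R),0;α,β])) : IsUnit β := by
  obtain ⟨u, hu⟩ := h
  set B : Matrix (Fin 2) (Fin 2) R := (u⁻¹).val with hB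
  have h1 : !![(1:R),0;α,β] * B = 1 := by rw [← hu, hB]; exact u.mul_inv
  have h2 : B * !![(1:R),0;α,β] = 1 := by rw [← hu, hB]; exact u.inv_mul
  have e01 : B 0 1 = 0 := by
    have := congrFun (congrFun h1 0) 1
    simpa [Matrix.mul_apply, Fin.sum_univ_two, Matrix.one_apply] using this
  refine isUnit_iff_exists.2 ⟨B 1 1, ?_, ?_⟩
  · have := congrFun (congrFun h1 1) 1
    simpa [Matrix.mul_apply, Fin.sum_univ_two, Matrix.one_apply, e01] using this
  · have := congrFun (congrFun h2 1) 1
    simpa [Matrix.mul_apply, Fin.sum_univ_two, Matrix.one_apply, e01] using this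

lemma exists_std (P₁ P₂ P₃ : Submodule R (R × R))
    (h1 : P₁ ∈ ProjLine R) (h2 : P₂ ∈ ProjLine R) (h3 : P₃ ∈ ProjLine R)
    (h12 : ¬ Par R P₁ P₂) (h13 : ¬ Par R P₁ P₃) (h23 : ¬ Par R P₂ P₃) :
    ∃ g : (Matrix (Fin 2) (Fin 2) R)ˣ,
      Submodule.map (actMap g.val) (Submodule.span R {((1:R),(0:R))}) = P₁ ∧
      Submodule.map (actMap g.val) (Submodule.span R {((0:R),(1:R))}) = P₂ ∧
      Submodule.map (actMap g.val) (Submodule.span R {((1:R),(1:R))}) = P₃ := by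
  obtain ⟨p, hp, rfl⟩ := h1
  obtain ⟨q, hq, rfl⟩ := h2
  obtain ⟨r, hr, rfl⟩ := h3
  have hpq : IsUnit (!![p.1, p.2; q.1, q.2] : Matrix (Fin 2) (Fin 2) R) := by
    by_contra h; exact h12 ⟨p, q, hp, hq, rfl, rfl, h⟩
  have hpr : IsUnit (!![p.1, p.2; r.1, r.2] : Matrix (Fin 2) (Fin 2) R) := by
    by_contra h; exact h13 ⟨p, r, hp, hr, rfl, rfl, h⟩
  have hqr : IsUnit (!![q.1, q.2; r.1, r.2] : Matrix (Fin 2) (Fin 2) R) := by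
    by_contra h; exact h23 ⟨q, r, hq, hr, rfl, rfl, h⟩
  set M : Matrix (Fin 2) (Fin 2) R := !![p.1, p.2; q.1, q.2] with hM
  obtain ⟨uM, huM⟩ := hpq
  set N : Matrix (Fin 2) (Fin 2) R := (uM⁻¹).val with hN
  have hMN : M * N = 1 := by rw [← huM, hN]; exact uM.mul_inv
  have hNM : N * M = 1 := by rw [← huM, hN]; exact uM.inv_mul
  -- the coordinates of r w.r.t. the basis p, q
  set α : R := r.1 * N 0 0 + r.2 * N 1 0 with hα
  set β : R := r.1 * N 0 1 + r.2 * N 1 1 with hβ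
  have hNr : actMap N r = (α, β) := rfl
  have key : ∀ x : R × R, actMap M (actMap N x) = x := by
    intro x
    have : actMap N (actMap M x) = actMap (M * N) x := by rw [actMap_mul]; rfl
    have h' : actMap M (actMap N x) = actMap (N * M) x := by rw [actMap_mul]; rfl
    rw [h', hNM, actMap_one]; rfl
  have hMp : actMap M ((1:R), (0:R)) = p := by simp [actMap, hM]
  have hMq : actMap M ((0:R), (1:R)) = q := by simp [actMap, hM]
  have hNp : actMap N p = ((1:R), (0:R)) := by
    have : actMap N (actMap M ((1:R),(0:R))) = actMap (M * N) ((1:R),(0:R)) := by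
      rw [actMap_mul]; rfl
    rw [← hMp, this, hMN, actMap_one]; rfl
  have hNq : actMap N q = ((0:R), (1:R)) := by
    have : actMap N (actMap M ((0:R),(1:R))) = actMap (M * N) ((0:R),(1:R)) := by
      rw [actMap_mul]; rfl
    rw [← hMq, this, hMN, actMap_one]; rfl
  have hNp1 : p.1 * N 0 0 + p.2 * N 1 0 = 1 := congrArg Prod.fst hNp
  have hNp2 : p.1 * N 0 1 + p.2 * N 1 1 = 0 := congrArg Prod.snd hNp
  have hNq1 : q.1 * N 0 0 + q.2 * N 1 0 = 0 := congrArg Prod.fst hNq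
  have hNq2 : q.1 * N 0 1 + q.2 * N 1 1 = 1 := congrArg Prod.snd hNq
  -- α and β are units
  have hαu : IsUnit α := by
    apply unit_of_top α β
    have : !![q.1, q.2; r.1, r.2] * N = !![(0:R),1;α,β] := by
      ext i j
      fin_cases i <;> fin_cases j <;>
        simp [Matrix.mul_apply, Fin.sum_univ_two, hNq1, hNq2, hα, hβ]
    rw [← this]
    exact hqr.mul ⟨uM⁻¹, rfl⟩
  have hβu : IsUnit β := by
    apply unit_of_bot α β
    have : !![p.1, p.2; r.1, r.2] * N = !![(1:R),0;α,β] := by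
      ext i j
      fin_cases i <;> fin_cases j <;>
        simp [Matrix.mul_apply, Fin.sum_univ_two, hNp1, hNp2, hα, hβ]
    rw [← this]
    exact hpr.mul ⟨uM⁻¹, rfl⟩
  obtain ⟨ua, hua⟩ := hαu
  obtain ⟨ub, hub⟩ := hβu
  -- the matrix g with rows α•p and β•q
  have hDu : IsUnit (!![α, 0; 0, β] : Matrix (Fin 2) (Fin 2) R) := by
    refine isUnit_iff_exists.2 ⟨!![(ua⁻¹ : Rˣ), 0; 0, (ub⁻¹ : Rˣ)], ?_, ?_⟩ <;>
    · ext i j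
      fin_cases i <;> fin_cases j <;>
        simp [Matrix.mul_apply, Fin.sum_univ_two, Matrix.one_apply, ← hua, ← hub]
  have hgu : IsUnit (!![α, 0; 0, β] * M) := hDu.mul ⟨uM, huM⟩
  obtain ⟨g, hg⟩ := hgu
  have hgval : g.val = !![α * p.1, α * p.2; β * q.1, β * q.2] := by
    rw [hg]
    ext i j
    fin_cases i <;> fin_cases j <;>
      simp [Matrix.mul_apply, Fin.sum_univ_two, hM]
  refine ⟨g, ?_, ?_, ?_⟩
  · rw [Submodule.map_span, Set.image_singleton]
    have : actMap g.val ((1:R), (0:R)) = α • p := by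
      simp [actMap, hgval, Prod.smul_mk, smul_eq_mul]
      rfl
    rw [this]
    exact Submodule.span_singleton_smul_eq ⟨ua, hua⟩ p
  · rw [Submodule.map_span, Set.image_singleton]
    have : actMap g.val ((0:R), (1:R)) = β • q := by
      simp [actMap, hgval, Prod.smul_mk, smul_eq_mul]
      rfl
    rw [this]
    exact Submodule.span_singleton_smul_eq ⟨ub, hub⟩ q
  · rw [Submodule.map_span, Set.image_singleton]
    have h1 : actMap g.val ((1:R), (1:R)) = actMap M (α, β) := by
      simp [actMap, hgval, hM]
    have h2 : actMap M (α, β) = r := by rw [← hNr, key]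
    rw [h1, h2]
end Aux

/-- The group `GL₂(R)`, for `R` a finite local ring, acts transitively
on ordered triples of pairwise non-parallel points of the projective line `P(R)`. -/
theorem gl2_transitive_on_triples {R : Type*} [Ring R] [IsLocalRing R] [Finite R]
    (P₁ P₂ P₃ Q₁ Q₂ Q₃ : Submodule R (R × R))
    (hP₁ : P₁ ∈ ProjLine R) (hP₂ : P₂ ∈ ProjLine R) (hP₃ : P₃ ∈ ProjLine R)
    (hQ₁ : Q₁ ∈ ProjLine R) (hQ₂ : Q₂ ∈ ProjLine R) (hQ₃ : Q₃ ∈ ProjLine R)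
    (hP12 : ¬ Par R P₁ P₂) (hP13 : ¬ Par R P₁ P₃) (hP23 : ¬ Par R P₂ P₃)
    (hQ12 : ¬ Par R Q₁ Q₂) (hQ13 : ¬ Par R Q₁ Q₃) (hQ23 : ¬ Par R Q₂ Q₃) :
    ∃ g : (Matrix (Fin 2) (Fin 2) R)ˣ,
      Submodule.map (actMap g.val) P₁ = Q₁ ∧
      Submodule.map (actMap g.val) P₂ = Q₂ ∧
      Submodule.map (actMap g.val) P₃ = Q₃ := by
  obtain ⟨g, hg1, hg2, hg3⟩ := exists_std P₁ P₂ P₃ hP₁ hP₂ hP₃ hP12 hP13 hP23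
  obtain ⟨h, hh1, hh2, hh3⟩ := exists_std Q₁ Q₂ Q₃ hQ₁ hQ₂ hQ₃ hQ12 hQ13 hQ23
  refine ⟨g⁻¹ * h, ?_, ?_, ?_⟩
  · rw [← hg1, ← Submodule.map_comp, ← actMap_mul, ← Units.val_mul, mul_inv_cancel_left]
    exact hh1
  · rw [← hg2, ← Submodule.map_comp, ← actMap_mul, ← Units.val_mul, mul_inv_cancel_left]
    exact hh2
  · rw [← hg3, ← Submodule.map_comp, ← actMap_mul, ← Units.val_mul, mul_inv_cancel_left]
    exact hh3
end

section
/- Let σ ≠ id and ω the map of P(R) induced by conjugation with u = 1 + bε (b ∈ K), R = K(ε;σ). Then ω maps R(x₁ + x₂ε, 1) to R(x₁ + (x₂ + b(x₁ − σ(x₁)))ε, 1) and fixes every point R(1,z) with z ∈ I. In particular ω maps each point to a parallel point, and fixes R(x,1) with x ∈ K exactly when x ∈ Fix(σ). -/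
namespace TDNAux

variable {K : Type*} [Field K] {σ : K →+* K}

/-- The first-component projection as a ring hom. -/
def pa (K : Type*) [Field K] (σ : K →+* K) : TDN K σ →+* K where
  toFun x := x.a
  map_one' := rfl
  map_mul' _ _ := rfl
  map_zero' := rfl
  map_add' _ _ := rfl

@[simp] lemma pa_apply (x : TDN K σ) : pa K σ x = x.a := rfl

lemma isUnit_iff {z : TDN K σ} : IsUnit z ↔ z.a ≠ 0 := by
  constructor
  · rintro ⟨w, rfl⟩ h
    have hw := congrArg TDN.a w.val_inv
    simp only [TDN.mul_a, TDN.one_a] at hw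
    rw [h, zero_mul] at hw
    exact zero_ne_one hw
  · intro h
    have hσa : σ z.a ≠ 0 := fun h0 => h (by simpa using σ.injective (by simpa using h0))
    refine ⟨⟨z, ⟨z.a⁻¹, -(z.a⁻¹ * z.b * σ z.a⁻¹)⟩, ?_, ?_⟩, rfl⟩ <;>
      ext <;> simp [map_inv₀, map_neg] <;> field_simp <;> ring

lemma inv_coe (b : K) (u : (TDN K σ)ˣ) (hu : (u : TDN K σ) = ⟨1, b⟩) :
    ((u⁻¹ : (TDN K σ)ˣ) : TDN K σ) = ⟨1, -b⟩ := by
  have h1 : (u : TDN K σ) * ⟨1, -b⟩ = 1 := by ext <;> simp [hu]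
  calc ((u⁻¹ : (TDN K σ)ˣ) : TDN K σ)
      = ((u⁻¹ : (TDN K σ)ˣ) : TDN K σ) * ((u : TDN K σ) * ⟨1, -b⟩) := by
        rw [h1, mul_one]
    _ = (((u⁻¹ : (TDN K σ)ˣ) : TDN K σ) * (u : TDN K σ)) * ⟨1, -b⟩ := by
        rw [mul_assoc]
    _ = ⟨1, -b⟩ := by rw [u.inv_mul, one_mul]

/-- A `2×2` matrix over `TDN` whose entries have equal first components row-wise
degenerate (rows with the same `a`-parts in suitable positions) is not a unit when
its image over `K` has zero determinant. -/
lemma not_isUnit_of_map {M : Matrix (Fin 2) (Fin 2) (TDN K σ)}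
    (h : ¬ IsUnit (M.map (pa K σ))) : ¬ IsUnit M := fun hM => h (hM.map (pa K σ).mapMatrix)

lemma map_fin_two (p q r s : TDN K σ) :
    (!![p, q; r, s]).map (pa K σ) = !![p.a, q.a; r.a, s.a] := by
  ext i j
  fin_cases i <;> fin_cases j <;> simp [Matrix.map_apply]

lemma isRep_left (x : TDN K σ) : IsRep (TDN K σ) (x, 1) := by
  refine ⟨1, 0, ⟨⟨!![x, 1; 1, 0], !![0, 1; 1, -x], ?_, ?_⟩, rfl⟩⟩ <;>
    ext i j <;> fin_cases i <;> fin_cases j <;>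
      simp [Matrix.mul_apply, Fin.sum_univ_two]

lemma isRep_right (z : TDN K σ) : IsRep (TDN K σ) (1, z) := by
  refine ⟨0, 1, ⟨⟨!![1, z; 0, 1], !![1, -z; 0, 1], ?_, ?_⟩, rfl⟩⟩ <;>
    ext i j <;> fin_cases i <;> fin_cases j <;>
      simp [Matrix.mul_apply, Fin.sum_univ_two]

end TDNAux

/-- Let `σ ≠ id` and `ω` the map of `P(R)` induced by conjugation with
the unit `u = 1 + bε` (`b ∈ K`), `R = K(ε;σ)`. Then `ω` maps `R(x₁ + x₂ε, 1)` to
`R(x₁ + (x₂ + b(x₁ − σ(x₁)))ε, 1)` and fixes every point `R(1,z)` with `z ∈ I`.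
In particular `ω` maps each point to a parallel point, and (for `b ≠ 0`) it fixes
`R(x,1)` with `x ∈ K` exactly when `x ∈ Fix(σ)`. -/
theorem conj_action_on_projLine {K : Type*} [Field K] (σ : K →+* K)
    (hσ : Function.Injective σ) (hne : σ ≠ RingHom.id K)
    (b : K) (u : (TDN K σ)ˣ) (hu : (u : TDN K σ) = ⟨1, b⟩) :
    (∀ x₁ x₂ : K,
      ((u⁻¹ : (TDN K σ)ˣ) : TDN K σ) * ⟨x₁, x₂⟩ * (u : TDN K σ)
        = ⟨x₁, x₂ + b * (x₁ - σ x₁)⟩) ∧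
    (∀ z : TDN K σ, ¬ IsUnit z →
      ((u⁻¹ : (TDN K σ)ˣ) : TDN K σ) * z * (u : TDN K σ) = z) ∧
    (∀ x : TDN K σ,
      Par (TDN K σ)
        (Submodule.span (TDN K σ) {(((u⁻¹ : (TDN K σ)ˣ) : TDN K σ) * x * (u : TDN K σ), (1 : TDN K σ))})
        (Submodule.span (TDN K σ) {(x, (1 : TDN K σ))})) ∧
    (∀ z : TDN K σ, ¬ IsUnit z →
      Par (TDN K σ)
        (Submodule.span (TDN K σ) {((1 : TDN K σ), ((u⁻¹ : (TDN K σ)ˣ) : TDN K σ) * z * (u : TDN K σ))})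
        (Submodule.span (TDN K σ) {((1 : TDN K σ), z)})) ∧
    (b ≠ 0 → ∀ x : K,
      (Submodule.span (TDN K σ)
          {(((u⁻¹ : (TDN K σ)ˣ) : TDN K σ) * ⟨x, 0⟩ * (u : TDN K σ), (1 : TDN K σ))}
        = Submodule.span (TDN K σ) {((⟨x, 0⟩ : TDN K σ), (1 : TDN K σ))}
        ↔ σ x = x)) := by
  have hinv := TDNAux.inv_coe b u hu
  have part1 : ∀ x₁ x₂ : K,
      ((u⁻¹ : (TDN K σ)ˣ) : TDN K σ) * ⟨x₁, x₂⟩ * (u : TDN K σ)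
        = ⟨x₁, x₂ + b * (x₁ - σ x₁)⟩ := by
    intro x₁ x₂
    rw [hinv, hu]
    ext <;> simp <;> ring
  have part2 : ∀ z : TDN K σ, ¬ IsUnit z →
      ((u⁻¹ : (TDN K σ)ˣ) : TDN K σ) * z * (u : TDN K σ) = z := by
    intro z hz
    have hza : z.a = 0 := by
      by_contra h
      exact hz (TDNAux.isUnit_iff.mpr h)
    rw [hinv, hu]
    ext <;> simp [hza]
  have hconj_a : ∀ x : TDN K σ,
      (((u⁻¹ : (TDN K σ)ˣ) : TDN K σ) * x * (u : TDN K σ)).a = x.a := by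
    intro x
    rw [hinv, hu]
    simp
  refine ⟨part1, part2, ?_, ?_, ?_⟩
  · intro x
    refine ⟨(((u⁻¹ : (TDN K σ)ˣ) : TDN K σ) * x * (u : TDN K σ), 1), (x, 1),
      TDNAux.isRep_left _, TDNAux.isRep_left _, rfl, rfl, ?_⟩
    apply TDNAux.not_isUnit_of_map
    rw [show (!![(((u⁻¹ : (TDN K σ)ˣ) : TDN K σ) * x * (u : TDN K σ), (1 : TDN K σ)).1,
        (((u⁻¹ : (TDN K σ)ˣ) : TDN K σ) * x * (u : TDN K σ), (1 : TDN K σ)).2;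
        ((x, (1 : TDN K σ)) : TDN K σ × TDN K σ).1, ((x, (1 : TDN K σ)) : TDN K σ × TDN K σ).2]) =
        !![((u⁻¹ : (TDN K σ)ˣ) : TDN K σ) * x * (u : TDN K σ), 1; x, 1] from rfl,
      TDNAux.map_fin_two]
    simp [Matrix.isUnit_iff_isUnit_det, Matrix.det_fin_two_of, hconj_a]
  · intro z hz
    have hza : z.a = 0 := by
      by_contra h
      exact hz (TDNAux.isUnit_iff.mpr h)
    rw [part2 z hz]
    refine ⟨(1, z), (1, z), TDNAux.isRep_right _, TDNAux.isRep_right _, rfl, rfl, ?_⟩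
    apply TDNAux.not_isUnit_of_map
    rw [show (!![((1 : TDN K σ), z).1, ((1 : TDN K σ), z).2;
        ((1 : TDN K σ), z).1, ((1 : TDN K σ), z).2]) = !![1, z; 1, z] from rfl,
      TDNAux.map_fin_two]
    simp [Matrix.isUnit_iff_isUnit_det, Matrix.det_fin_two_of, hza]
  · intro hb x
    rw [part1 x 0]
    constructor
    · intro hspan
      have hmem : ((⟨x, 0 + b * (x - σ x)⟩ : TDN K σ), (1 : TDN K σ)) ∈
          Submodule.span (TDN K σ) {((⟨x, 0⟩ : TDN K σ), (1 : TDN K σ))} := by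
        rw [← hspan]
        exact Submodule.mem_span_singleton_self _
      obtain ⟨r, hr⟩ := Submodule.mem_span_singleton.mp hmem
      simp only [Prod.smul_mk, smul_eq_mul, Prod.mk.injEq, mul_one] at hr
      obtain ⟨hr1, hr2⟩ := hr
      rw [hr2, one_mul] at hr1
      have hb2 : (0 : K) = 0 + b * (x - σ x) := congrArg TDN.b hr1
      have : b * (x - σ x) = 0 := by rw [zero_add] at hb2; exact hb2.symm
      rcases mul_eq_zero.mp this with h | h
      · exact absurd h hb
      · exact (sub_eq_zero.mp h).symm
    · intro hx
      have : (⟨x, 0 + b * (x - σ x)⟩ : TDN K σ) = ⟨x, 0⟩ := by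
        rw [hx]
        ext <;> simp
      rw [this]
end

section
/- Let σ ≠ id, K = GF(q), R = K(ε;σ), and fix x₁ ∈ K with σ(x₁) ≠ x₁. Then the group U = {1 + bε : b ∈ K} acts (via conjugation) regularly on the parallel class {R(x₁ + x₂ε, 1) : x₂ ∈ K} of the point R(x₁,1): for each x₂ ∈ K there is a unique b ∈ K with x₂ = b(x₁ − σ(x₁)). -/
/-- Let `σ ≠ id`, `K = GF(q)`, `R = K(ε;σ)`, and fix `x₁ ∈ K` with
`σ(x₁) ≠ x₁`. Then the group `U = {1 + bε : b ∈ K}` acts via conjugation regularly on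
the parallel class `{R(x₁ + x₂ε, 1) : x₂ ∈ K}` of `R(x₁,1)`: for each `x₂ ∈ K` there
is a unique `b ∈ K` with `(1+bε)⁻¹ (x₁) (1+bε) = x₁ + x₂ε`, equivalently a unique
`b ∈ K` with `x₂ = b(x₁ − σ(x₁))`.  (Note `(1+bε)⁻¹ = 1 − bε`.) -/
theorem U_regular_on_parallel_class {K : Type*} [Field K] [Fintype K] (σ : K ≃+* K)
    (hne : σ ≠ RingEquiv.refl K) (x₁ : K) (hx₁ : σ x₁ ≠ x₁) :
    ∀ x₂ : K,
      (∃! b : K,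
        (⟨1, -b⟩ : TDN K (σ : K →+* K)) * ⟨x₁, 0⟩ * ⟨1, b⟩ = ⟨x₁, x₂⟩) ∧
      (∃! b : K, x₂ = b * (x₁ - σ x₁)) := by
  intro x₂
  have hd : x₁ - σ x₁ ≠ 0 := sub_ne_zero.mpr (Ne.symm hx₁)
  constructor
  · refine ⟨x₂ / (x₁ - σ x₁), ?_, ?_⟩
    · ext <;> simp <;> field_simp <;> ring
    · intro b hb
      have h := congrArg TDN.b hb
      simp at h
      field_simp
      linear_combination h
  · refine ⟨x₂ / (x₁ - σ x₁), by field_simp, ?_⟩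
    intro b hb
    field_simp
    linear_combination -hb
end

section
/- Let K = GF(q) with σ ∈ Aut(K), σ ≠ id. The point set B₀ = {K·(a, 0, 0, σ(a), a·σ(a), 1) : a ∈ K} ∪ {K·(0,0,0,0,1,0)} in PG(5,K) is a cap (no three of its points are collinear) and spans the 3-dimensional projective subspace given by x₂ = 0 = x₃. -/
private lemma scale6 {K : Type*} [Field K] {v w : Fin 6 → K}
    (h : Submodule.span K {v} = Submodule.span K {w}) : ∃ t : K, t ≠ 0 ∧ v = t • w := by
  rw [Submodule.span_singleton_eq_span_singleton] at h
  obtain ⟨z, hz⟩ := h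
  exact ⟨(z.val)⁻¹, inv_ne_zero z.ne_zero, by
    rw [← hz, Units.smul_def, smul_smul, inv_mul_cancel₀ z.ne_zero, one_smul]⟩

private lemma cons_val_five {α : Type*} (x : α) (u : Fin 5 → α) : Matrix.vecCons x u 5 = u 4 :=
  rfl

private lemma coords6 {K : Type*} [Field K] {x y z : K} {u v w : Fin 6 → K}
    (h : x • u + y • v + z • w = 0) (i : Fin 6) : x * u i + y * v i + z * w i = 0 := by
  simpa using congrFun h i

private lemma indep3 {K : Type*} [Field K] (v₁ v₂ v₃ : Fin 6 → K)
    (h : ∀ c₁ c₂ c₃ : K, c₁ • v₁ + c₂ • v₂ + c₃ • v₃ = 0 → c₁ = 0 ∧ c₂ = 0 ∧ c₃ = 0) :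
    LinearIndependent K ![v₁, v₂, v₃] := by
  rw [Fintype.linearIndependent_iff]
  intro g hg
  rw [Fin.sum_univ_three] at hg
  simp only [Matrix.cons_val_zero, Matrix.cons_val_one, Matrix.head_cons, Matrix.cons_val_two,
    Matrix.tail_cons] at hg
  obtain ⟨h1, h2, h3⟩ := h _ _ _ hg
  intro i; fin_cases i <;> assumption

private lemma scalarA {K : Type*} [Field K] {a b c sa sb sc α β γ : K}
    (hac : a ≠ c) (hbc : b ≠ c) (sab : sa ≠ sb)
    (h5 : α + β + γ = 0) (h0 : α*a + β*b + γ*c = 0)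
    (h3 : α*sa + β*sb + γ*sc = 0) (h4 : α*(a*sa) + β*(b*sb) + γ*(c*sc) = 0) :
    α = 0 ∧ β = 0 ∧ γ = 0 := by
  have hβ : β * ((b-c)*(sb-sa)) = 0 := by linear_combination h4 - sa*h0 - c*h3 + c*sa*h5
  have hβ0 : β = 0 := by
    rcases mul_eq_zero.mp hβ with h | h
    · exact h
    rcases mul_eq_zero.mp h with h | h
    · exact absurd (sub_eq_zero.mp h) hbc
    · exact absurd h (sub_ne_zero.mpr sab.symm)
  have hα : α * ((a-c)*(sa-sb)) = 0 := by linear_combination h4 - sb*h0 - c*h3 + c*sb*h5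
  have hα0 : α = 0 := by
    rcases mul_eq_zero.mp hα with h | h
    · exact h
    rcases mul_eq_zero.mp h with h | h
    · exact absurd (sub_eq_zero.mp h) hac
    · exact absurd h (sub_ne_zero.mpr sab)
  exact ⟨hα0, hβ0, by linear_combination h5 - hα0 - hβ0⟩

private lemma scalarB {K : Type*} [Field K] {a b sa sb α β γ : K}
    (hab : a ≠ b)
    (h5 : α + β = 0) (h0 : α*a + β*b = 0) (h4 : α*(a*sa) + β*(b*sb) + γ = 0) :
    α = 0 ∧ β = 0 ∧ γ = 0 := by
  have hα : α * (a - b) = 0 := by linear_combination h0 - b*h5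
  have hα0 : α = 0 := by
    rcases mul_eq_zero.mp hα with h | h
    · exact h
    · exact absurd (sub_eq_zero.mp h) hab
  have hβ0 : β = 0 := by linear_combination h5 - hα0
  exact ⟨hα0, hβ0, by linear_combination h4 - (a*sa)*hα0 - (b*sb)*hβ0⟩

/-- Let `K = GF(q)`, `σ ∈ Aut(K)`, `σ ≠ id`. The point set
`B₀ = {K·(a, 0, 0, σ(a), a·σ(a), 1) : a ∈ K} ∪ {K·(0,0,0,0,1,0)}` in `PG(5,K)`
(points = one-dimensional subspaces of `K⁶`) is a cap (no three of its points are
collinear, i.e. any three distinct points have linearly independent representatives)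
and spans the 3-dimensional projective subspace given by `x₂ = 0 = x₃` (coordinates
indexed `x₁,…,x₆`). -/
theorem base_block_is_cap_spanning_solid {K : Type*} [Field K] [Fintype K]
    (σ : K ≃+* K) (hne : σ ≠ RingEquiv.refl K)
    (B₀ : Set (Submodule K (Fin 6 → K)))
    (hB₀ : B₀ = {P | (∃ a : K, P = Submodule.span K {![a, 0, 0, σ a, a * σ a, 1]}) ∨
        P = Submodule.span K {![0, 0, 0, 0, 1, 0]}})
    (W : Submodule K (Fin 6 → K))
    (hW : ∀ w : Fin 6 → K, w ∈ W ↔ w 1 = 0 ∧ w 2 = 0) :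
    (∀ p ∈ B₀, ∀ q ∈ B₀, ∀ r ∈ B₀, p ≠ q → p ≠ r → q ≠ r →
      ∀ v₁ v₂ v₃ : Fin 6 → K,
        p = Submodule.span K {v₁} → q = Submodule.span K {v₂} →
        r = Submodule.span K {v₃} →
        LinearIndependent K ![v₁, v₂, v₃]) ∧
    sSup B₀ = W ∧ Module.finrank K W = 4 := by
  set F : K → (Fin 6 → K) := fun a => ![a, 0, 0, σ a, a * σ a, 1] with hF
  set n : Fin 6 → K := ![0, 0, 0, 0, 1, 0] with hn
  -- span of F a determines a
  have spanF_inj : ∀ a b : K, Submodule.span K {F a} = Submodule.span K {F b} → a = b := by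
    intro a b h
    obtain ⟨t, ht0, ht⟩ := scale6 h
    have h5 : (1 : K) = t * 1 := congrFun ht 5
    have h0 : a = t * b := congrFun ht 0
    rw [mul_one] at h5
    rw [← h5, one_mul] at h0
    exact h0
  have spanF_ne : ∀ a : K, Submodule.span K {F a} ≠ Submodule.span K {n} := by
    intro a h
    obtain ⟨t, ht0, ht⟩ := scale6 h
    have h5 : (1 : K) = t * 0 := congrFun ht 5
    simp at h5
  constructor
  · -- cap property
    rw [hB₀]
    rintro p hp q hq r hr hpq hpr hqr v₁ v₂ v₃ h1 h2 h3
    apply indep3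
    intro c₁ c₂ c₃ hsum
    rcases hp with ⟨a, hpa⟩ | hpa <;> rcases hq with ⟨b, hqb⟩ | hqb <;>
      rcases hr with ⟨c, hrc⟩ | hrc
    · -- all finite
      have hab : a ≠ b := fun h => hpq (by rw [hpa, hqb, h])
      have hac : a ≠ c := fun h => hpr (by rw [hpa, hrc, h])
      have hbc : b ≠ c := fun h => hqr (by rw [hqb, hrc, h])
      obtain ⟨t₁, ht₁, e₁⟩ := scale6 (h1 ▸ hpa : Submodule.span K {v₁} = _)
      obtain ⟨t₂, ht₂, e₂⟩ := scale6 (h2 ▸ hqb : Submodule.span K {v₂} = _)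
      obtain ⟨t₃, ht₃, e₃⟩ := scale6 (h3 ▸ hrc : Submodule.span K {v₃} = _)
      rw [e₁, e₂, e₃, smul_smul, smul_smul, smul_smul] at hsum
      have H5 : (c₁*t₁) * 1 + (c₂*t₂) * 1 + (c₃*t₃) * 1 = 0 := coords6 hsum 5
      have H0 : (c₁*t₁) * a + (c₂*t₂) * b + (c₃*t₃) * c = 0 := coords6 hsum 0
      have H3 : (c₁*t₁) * σ a + (c₂*t₂) * σ b + (c₃*t₃) * σ c = 0 := coords6 hsum 3
      have H4 : (c₁*t₁) * (a * σ a) + (c₂*t₂) * (b * σ b) + (c₃*t₃) * (c * σ c) = 0 :=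
        coords6 hsum 4
      have sab : σ a ≠ σ b := fun h => hab (σ.injective h)
      obtain ⟨hα, hβ, hγ⟩ := scalarA hac hbc sab (by linear_combination H5) H0 H3 H4
      refine ⟨?_, ?_, ?_⟩
      · rcases mul_eq_zero.mp hα with h | h; exact h; exact absurd h ht₁
      · rcases mul_eq_zero.mp hβ with h | h; exact h; exact absurd h ht₂
      · rcases mul_eq_zero.mp hγ with h | h; exact h; exact absurd h ht₃
    · -- p,q finite, r infinite
      have hab : a ≠ b := fun h => hpq (by rw [hpa, hqb, h])
      obtain ⟨t₁, ht₁, e₁⟩ := scale6 (h1 ▸ hpa : Submodule.span K {v₁} = _)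
      obtain ⟨t₂, ht₂, e₂⟩ := scale6 (h2 ▸ hqb : Submodule.span K {v₂} = _)
      obtain ⟨t₃, ht₃, e₃⟩ := scale6 (h3 ▸ hrc : Submodule.span K {v₃} = _)
      rw [e₁, e₂, e₃, smul_smul, smul_smul, smul_smul] at hsum
      have H5 : (c₁*t₁) * 1 + (c₂*t₂) * 1 + (c₃*t₃) * 0 = 0 := coords6 hsum 5
      have H0 : (c₁*t₁) * a + (c₂*t₂) * b + (c₃*t₃) * 0 = 0 := coords6 hsum 0
      have H4 : (c₁*t₁) * (a * σ a) + (c₂*t₂) * (b * σ b) + (c₃*t₃) * 1 = 0 := coords6 hsum 4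
      obtain ⟨hα, hβ, hγ⟩ := scalarB (α := c₁*t₁) (β := c₂*t₂) (γ := c₃*t₃)
        (sa := σ a) (sb := σ b) hab
        (by linear_combination H5) (by linear_combination H0) (by linear_combination H4)
      refine ⟨?_, ?_, ?_⟩
      · rcases mul_eq_zero.mp hα with h | h; exact h; exact absurd h ht₁
      · rcases mul_eq_zero.mp hβ with h | h; exact h; exact absurd h ht₂
      · rcases mul_eq_zero.mp hγ with h | h; exact h; exact absurd h ht₃
    · -- p,r finite, q infinite
      have hac : a ≠ c := fun h => hpr (by rw [hpa, hrc, h])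
      obtain ⟨t₁, ht₁, e₁⟩ := scale6 (h1 ▸ hpa : Submodule.span K {v₁} = _)
      obtain ⟨t₂, ht₂, e₂⟩ := scale6 (h2 ▸ hqb : Submodule.span K {v₂} = _)
      obtain ⟨t₃, ht₃, e₃⟩ := scale6 (h3 ▸ hrc : Submodule.span K {v₃} = _)
      rw [e₁, e₂, e₃, smul_smul, smul_smul, smul_smul] at hsum
      have H5 : (c₁*t₁) * 1 + (c₂*t₂) * 0 + (c₃*t₃) * 1 = 0 := coords6 hsum 5
      have H0 : (c₁*t₁) * a + (c₂*t₂) * 0 + (c₃*t₃) * c = 0 := coords6 hsum 0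
      have H4 : (c₁*t₁) * (a * σ a) + (c₂*t₂) * 1 + (c₃*t₃) * (c * σ c) = 0 := coords6 hsum 4
      obtain ⟨hα, hβ, hγ⟩ := scalarB (α := c₁*t₁) (β := c₃*t₃) (γ := c₂*t₂)
        (sa := σ a) (sb := σ c) hac
        (by linear_combination H5) (by linear_combination H0) (by linear_combination H4)
      refine ⟨?_, ?_, ?_⟩
      · rcases mul_eq_zero.mp hα with h | h; exact h; exact absurd h ht₁
      · rcases mul_eq_zero.mp hγ with h | h; exact h; exact absurd h ht₂
      · rcases mul_eq_zero.mp hβ with h | h; exact h; exact absurd h ht₃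
    · exact absurd (hqb.trans hrc.symm) hqr
    · -- q,r finite, p infinite
      have hbc : b ≠ c := fun h => hqr (by rw [hqb, hrc, h])
      obtain ⟨t₁, ht₁, e₁⟩ := scale6 (h1 ▸ hpa : Submodule.span K {v₁} = _)
      obtain ⟨t₂, ht₂, e₂⟩ := scale6 (h2 ▸ hqb : Submodule.span K {v₂} = _)
      obtain ⟨t₃, ht₃, e₃⟩ := scale6 (h3 ▸ hrc : Submodule.span K {v₃} = _)
      rw [e₁, e₂, e₃, smul_smul, smul_smul, smul_smul] at hsum
      have H5 : (c₁*t₁) * 0 + (c₂*t₂) * 1 + (c₃*t₃) * 1 = 0 := coords6 hsum 5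
      have H0 : (c₁*t₁) * 0 + (c₂*t₂) * b + (c₃*t₃) * c = 0 := coords6 hsum 0
      have H4 : (c₁*t₁) * 1 + (c₂*t₂) * (b * σ b) + (c₃*t₃) * (c * σ c) = 0 := coords6 hsum 4
      obtain ⟨hα, hβ, hγ⟩ := scalarB (α := c₂*t₂) (β := c₃*t₃) (γ := c₁*t₁)
        (sa := σ b) (sb := σ c) hbc
        (by linear_combination H5) (by linear_combination H0) (by linear_combination H4)
      refine ⟨?_, ?_, ?_⟩
      · rcases mul_eq_zero.mp hγ with h | h; exact h; exact absurd h ht₁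
      · rcases mul_eq_zero.mp hα with h | h; exact h; exact absurd h ht₂
      · rcases mul_eq_zero.mp hβ with h | h; exact h; exact absurd h ht₃
    · exact absurd (hpa.trans hrc.symm) hpr
    · exact absurd (hpa.trans hqb.symm) hpq
    · exact absurd (hpa.trans hqb.symm) hpq
  · -- span and dimension
    obtain ⟨c, hc⟩ : ∃ c : K, σ c ≠ c := by
      by_contra h
      push_neg at h
      exact hne (RingEquiv.ext h)
    set S := sSup B₀ with hS
    have memF : ∀ a : K, F a ∈ S := by
      intro a
      exact Submodule.mem_sSup_of_mem (by rw [hB₀]; exact Or.inl ⟨a, rfl⟩)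
        (Submodule.mem_span_singleton_self _)
    have memn : n ∈ S :=
      Submodule.mem_sSup_of_mem (by rw [hB₀]; exact Or.inr rfl)
        (Submodule.mem_span_singleton_self _)
    set E0 : Fin 6 → K := ![1, 0, 0, 0, 0, 0] with hE0
    set E3 : Fin 6 → K := ![0, 0, 0, 1, 0, 0] with hE3
    set E5 : Fin 6 → K := ![0, 0, 0, 0, 0, 1] with hE5
    have hF0 : F 0 = E5 := by
      funext i; fin_cases i <;> simp [hF, hE5, cons_val_five]
    have hI1 : F 1 - n - F 0 = E0 + E3 := by
      funext i; fin_cases i <;> simp [hF, hn, hE0, hE3, hE5, cons_val_five]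
    have hIc : F c - (c * σ c) • n - F 0 = c • E0 + σ c • E3 := by
      funext i; fin_cases i <;> simp [hF, hn, hE0, hE3, hE5, cons_val_five]
    have memE5 : E5 ∈ S := hF0 ▸ memF 0
    have memu1 : E0 + E3 ∈ S := by
      rw [← hI1]; exact sub_mem (sub_mem (memF 1) memn) (memF 0)
    have memuc : c • E0 + σ c • E3 ∈ S := by
      rw [← hIc]; exact sub_mem (sub_mem (memF c) (Submodule.smul_mem _ _ memn)) (memF 0)
    have memE3 : E3 ∈ S := by
      have h1 : (σ c - c) • E3 ∈ S := by
        have h2 := sub_mem memuc (Submodule.smul_mem _ c memu1)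
        have h3 : (c • E0 + σ c • E3) - c • (E0 + E3) = (σ c - c) • E3 := by module
        rwa [h3] at h2
      have h4 := Submodule.smul_mem S (σ c - c)⁻¹ h1
      rwa [smul_smul, inv_mul_cancel₀ (sub_ne_zero.mpr hc), one_smul] at h4
    have memE0 : E0 ∈ S := by
      have := sub_mem memu1 memE3
      rwa [add_sub_cancel_right] at this
    have decomp : ∀ w : Fin 6 → K, w 1 = 0 → w 2 = 0 →
        w = w 0 • E0 + w 3 • E3 + w 4 • n + w 5 • E5 := by
      intro w hw1 hw2
      funext i
      fin_cases i <;> simp [hE0, hE3, hE5, hn, hw1, hw2, cons_val_five]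
    have hSW : S = W := by
      apply le_antisymm
      · apply sSup_le
        intro P hP
        rw [hB₀] at hP
        rcases hP with ⟨a, rfl⟩ | rfl <;>
          · rw [Submodule.span_le, Set.singleton_subset_iff]
            rw [SetLike.mem_coe, hW]
            exact ⟨rfl, rfl⟩
      · intro w hw
        rw [hW] at hw
        rw [decomp w hw.1 hw.2]
        exact add_mem (add_mem (add_mem (Submodule.smul_mem _ _ memE0)
          (Submodule.smul_mem _ _ memE3)) (Submodule.smul_mem _ _ memn))
          (Submodule.smul_mem _ _ memE5)
    refine ⟨hSW, ?_⟩
    -- finrank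
    have hWspan : W = Submodule.span K (Set.range ![E0, E3, n, E5]) := by
      apply le_antisymm
      · intro w hw
        rw [hW] at hw
        rw [decomp w hw.1 hw.2]
        have m0 : E0 ∈ Submodule.span K (Set.range ![E0, E3, n, E5]) :=
          Submodule.subset_span ⟨0, rfl⟩
        have m1 : E3 ∈ Submodule.span K (Set.range ![E0, E3, n, E5]) :=
          Submodule.subset_span ⟨1, rfl⟩
        have m2 : n ∈ Submodule.span K (Set.range ![E0, E3, n, E5]) :=
          Submodule.subset_span ⟨2, rfl⟩
        have m3 : E5 ∈ Submodule.span K (Set.range ![E0, E3, n, E5]) :=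
          Submodule.subset_span ⟨3, rfl⟩
        exact add_mem (add_mem (add_mem (Submodule.smul_mem _ _ m0)
          (Submodule.smul_mem _ _ m1)) (Submodule.smul_mem _ _ m2))
          (Submodule.smul_mem _ _ m3)
      · rw [Submodule.span_le]
        rintro x ⟨i, rfl⟩
        rw [SetLike.mem_coe, hW]
        fin_cases i <;> exact ⟨rfl, rfl⟩
    have hindep : LinearIndependent K ![E0, E3, n, E5] := by
      rw [Fintype.linearIndependent_iff]
      intro g hg
      rw [Fin.sum_univ_four] at hg
      simp only [Matrix.cons_val_zero, Matrix.cons_val_one, Matrix.head_cons,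
        Matrix.cons_val_two, Matrix.tail_cons, Matrix.cons_val_three] at hg
      have h0 : g 0 * E0 0 + g 1 * E3 0 + g 2 * n 0 + g 3 * E5 0 = 0 := by
        simpa using congrFun hg 0
      have h3 : g 0 * E0 3 + g 1 * E3 3 + g 2 * n 3 + g 3 * E5 3 = 0 := by
        simpa using congrFun hg 3
      have h4 : g 0 * E0 4 + g 1 * E3 4 + g 2 * n 4 + g 3 * E5 4 = 0 := by
        simpa using congrFun hg 4
      have h5 : g 0 * E0 5 + g 1 * E3 5 + g 2 * n 5 + g 3 * E5 5 = 0 := by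
        simpa using congrFun hg 5
      simp [hE0, hE3, hE5, hn, cons_val_five] at h0 h3 h4 h5
      intro i; fin_cases i <;> assumption
    rw [hWspan]
    rw [finrank_span_eq_card hindep]
    simp
end
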